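/- In the free left distributive magma A on one generator x, for every element p there exists N such that p <_L x^(n) for all n ≥ N, where x^(0) = x and x^(n+1) = x^(n) · x^(n). -/

import Mathlib

/-- Equivalence of terms under the left distributive law. -/
inductive LDRel : FreeMagma Unit → FreeMagma Unit → Prop
  | ld : ∀ a b c, LDRel (a * (b * c)) ((a * b) * (a * c))
  | refl : ∀ a, LDRel a a
  | symm : ∀ {a b}, LDRel a b → LDRel b a
  | trans : ∀ {a b c}, LDRel a b → LDRel b c → LDRel a c
  | mul_congr : ∀ {a b c d}, LDRel a b → LDRel c d → LDRel (a * c) (b * d)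

/-- The free left distributive magma on one generator. -/
def FreeLD : Type := Quot LDRel

/-- Multiplication on the free left distributive magma. -/
def FreeLD.mul : FreeLD → FreeLD → FreeLD :=
  Quot.map₂ (· * ·) (fun a _ _ h => LDRel.mul_congr (LDRel.refl a) h)
    (fun _ _ b h => LDRel.mul_congr h (LDRel.refl b))

/-- The generator `x` of the free left distributive magma. -/
def FreeLD.x : FreeLD := Quot.mk _ (FreeMagma.of ())

/-- `LtL mul u w` : `w = (...((u·c₁)·c₂)...)·cₙ` for some `n ≥ 1`. -/
def LtL {M : Type*} (mul : M → M → M) (u w : M) : Prop :=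
  ∃ l : List M, l ≠ [] ∧ w = l.foldl mul u

/-- Iterated squares: `w^(0) = w`, `w^(n+1) = w^(n) · w^(n)`. -/
def iterSq {M : Type*} (mul : M → M → M) (w : M) : ℕ → M
  | 0 => w
  | n + 1 => mul (iterSq mul w n) (iterSq mul w n)

/-- The left distributive law in `FreeLD`. -/
lemma FreeLD.ld (a b c : FreeLD) :
    FreeLD.mul a (FreeLD.mul b c) = FreeLD.mul (FreeLD.mul a b) (FreeLD.mul a c) := by
  induction a using Quot.ind with | _ a =>
  induction b using Quot.ind with | _ b =>
  induction c using Quot.ind with | _ c =>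
  exact Quot.sound (LDRel.ld a b c)

local notation "X" n => iterSq FreeLD.mul FreeLD.x n

/-- If `t · x^(n) = x^(n+1)`, the same holds at level `n+1`. -/
lemma FreeLD.step (t : FreeLD) (n : ℕ)
    (h : FreeLD.mul t (X n) = X (n + 1)) :
    FreeLD.mul t (X (n + 1)) = X (n + 2) := by
  show FreeLD.mul t (FreeLD.mul (X n) (X n)) = _
  rw [FreeLD.ld, h]
  rfl

lemma FreeLD.mono (t : FreeLD) {n m : ℕ} (hnm : n ≤ m)
    (h : FreeLD.mul t (X n) = X (n + 1)) :
    FreeLD.mul t (X m) = X (m + 1) := by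
  induction m, hnm using Nat.le_induction with
  | base => exact h
  | succ m _ ih => exact FreeLD.step t m ih

/-- Key lemma: every element eventually absorbs into the iterated squares. -/
lemma FreeLD.key (t : FreeLD) : ∃ n : ℕ, FreeLD.mul t (X n) = X (n + 1) := by
  induction t using Quot.ind with | _ t =>
  induction t with
  | ih1 u =>
    exact ⟨0, rfl⟩
  | ih2 a b ha hb =>
    obtain ⟨na, hna⟩ := ha
    obtain ⟨nb, hnb⟩ := hb
    set n := max na nb with hn
    have ha' : FreeLD.mul (Quot.mk _ a) (X n) = X (n + 1) :=
      FreeLD.mono _ (le_max_left _ _) hna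
    have hb' : FreeLD.mul (Quot.mk _ b) (X n) = X (n + 1) :=
      FreeLD.mono _ (le_max_right _ _) hnb
    refine ⟨n + 1, ?_⟩
    have hmk : (Quot.mk LDRel (a * b) : FreeLD)
        = FreeLD.mul (Quot.mk _ a) (Quot.mk _ b) := rfl
    rw [hmk, ← ha', ← FreeLD.ld (Quot.mk _ a) (Quot.mk _ b) (X n), hb']
    exact FreeLD.step _ n ha'

theorem ltL_iterSq_eventually (p : FreeLD) :
    ∃ N : ℕ, ∀ n ≥ N, LtL FreeLD.mul p (iterSq FreeLD.mul FreeLD.x n) := by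
  obtain ⟨n, hn⟩ := FreeLD.key p
  refine ⟨n + 1, fun m hm => ?_⟩
  induction m, hm using Nat.le_induction with
  | base =>
    exact ⟨[X n], by simp, by simpa [List.foldl] using hn.symm⟩
  | succ m _ ih =>
    obtain ⟨l, hl, hfold⟩ := ih
    refine ⟨l ++ [X m], by simp, ?_⟩
    rw [List.foldl_append, ← hfold]
    rfl
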